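/- arXiv:2401.15699 — 3 statements merged into one kernel-verified Lean document; each statement's English description precedes it below -/
import Mathlib

section
/- Let p ≥ 2 be real. There is a constant C > 0 (depending only on p) such that for all real x, y and all t ∈ [-1,1], we have | |x + t·y|^p − |x|^p − p·t·y·sign(x)·|x|^(p-1) | ≤ C · t² · |y|² · (|x|^(p-2) + |y|^(p-2)). -/
open Real Set

set_option maxHeartbeats 1000000

private lemma taylor_aux (p : ℝ) (hp : 2 ≤ p) (x s : ℝ) (hx : 0 ≤ x) :
    |(|x + s| ^ p) - |x| ^ p - p * s * Real.sign x * |x| ^ (p - 1)| ≤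
      ((3:ℝ) ^ p + 2 ^ p + p * 2 ^ (p - 1) + p * (p - 1) * (3/2) ^ (p - 2)) * s ^ 2
        * (|x| ^ (p - 2) + |s| ^ (p - 2)) := by
  have hp0 : (0:ℝ) < p := by linarith
  have hp1 : (1:ℝ) ≤ p - 1 := by linarith
  have hp2 : (0:ℝ) ≤ p - 2 := by linarith
  have habs : |x| = x := abs_of_nonneg hx
  have hsx : Real.sign x * |x| ^ (p - 1) = x ^ (p - 1) := by
    rcases eq_or_lt_of_le hx with h | h
    · simp [← h, Real.sign_zero, Real.zero_rpow (show p - 1 ≠ 0 from ne_of_gt (by linarith))]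
    · rw [Real.sign_of_pos h, habs, one_mul]
  have hsx' : p * s * Real.sign x * |x| ^ (p - 1) = p * s * x ^ (p - 1) := by
    rw [mul_assoc, hsx]
  rw [hsx', habs]
  set C₀ : ℝ := (3:ℝ) ^ p + 2 ^ p + p * 2 ^ (p - 1) with hC₀
  set C₁ : ℝ := p * (p - 1) * ((3:ℝ)/2) ^ (p - 2) with hC₁
  have hC₀pos : 0 < C₀ := by positivity
  have hC₁pos : 0 < C₁ := by positivity
  have hs2r : |s| ^ (2:ℝ) = s ^ 2 := by
    rw [show (2:ℝ) = ((2:ℕ):ℝ) by norm_num, Real.rpow_natCast, sq_abs]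
  have hspow : |s| ^ p = s ^ 2 * |s| ^ (p - 2) := by
    rcases eq_or_ne s 0 with rfl | hs
    · simp [Real.zero_rpow (ne_of_gt hp0)]
    · have hs' : 0 < |s| := abs_pos.mpr hs
      have h := (Real.rpow_add hs' 2 (p - 2)).symm
      rw [show (2:ℝ) + (p - 2) = p by ring, hs2r] at h
      exact h.symm
  by_cases hcase : x ≤ 2 * |s|
  · -- Case 1: x ≤ 2|s|
    have h1 : |x + s| ≤ 3 * |s| := by
      calc |x + s| ≤ |x| + |s| := abs_add_le _ _
        _ ≤ 3 * |s| := by rw [habs]; linarith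
    have b1 : |x + s| ^ p ≤ 3 ^ p * |s| ^ p := by
      rw [← Real.mul_rpow (by norm_num) (abs_nonneg s)]
      exact Real.rpow_le_rpow (abs_nonneg _) h1 hp0.le
    have b2 : x ^ p ≤ 2 ^ p * |s| ^ p := by
      rw [← Real.mul_rpow (by norm_num) (abs_nonneg s)]
      exact Real.rpow_le_rpow hx (by linarith) hp0.le
    have b3 : x ^ (p - 1) ≤ 2 ^ (p-1) * |s| ^ (p-1) := by
      rw [← Real.mul_rpow (by norm_num) (abs_nonneg s)]
      exact Real.rpow_le_rpow hx (by linarith) (by linarith)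
    have hs1 : |s| * |s| ^ (p - 1) = |s| ^ p := by
      rcases eq_or_ne s 0 with rfl | hs
      · simp [Real.zero_rpow (ne_of_gt hp0)]
      · have hs' : 0 < |s| := abs_pos.mpr hs
        have h := (Real.rpow_add hs' 1 (p - 1)).symm
        rw [show (1:ℝ) + (p - 1) = p by ring, Real.rpow_one] at h
        exact h
    have hLHS : |(|x + s| ^ p) - x ^ p - p * s * x ^ (p - 1)| ≤ C₀ * |s| ^ p := by
      have t1 : |(|x + s| ^ p) - x ^ p - p * s * x ^ (p - 1)|
          ≤ |x + s| ^ p + x ^ p + p * |s| * x ^ (p - 1) := by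
        have h0 : (0:ℝ) ≤ |x+s| ^ p := Real.rpow_nonneg (abs_nonneg _) p
        have h0' : (0:ℝ) ≤ x ^ p := Real.rpow_nonneg hx p
        have h0'' : |p * s * x ^ (p-1)| = p * |s| * x ^ (p-1) := by
          rw [abs_mul, abs_mul, abs_of_nonneg hp0.le,
            abs_of_nonneg (Real.rpow_nonneg hx _)]
        calc |(|x + s| ^ p) - x ^ p - p * s * x ^ (p - 1)|
            ≤ |(|x + s| ^ p) - x ^ p| + |p * s * x ^ (p-1)| := abs_sub _ _
          _ ≤ (|(|x + s| ^ p)| + |x ^ p|) + |p * s * x ^ (p-1)| := by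
              gcongr; exact abs_sub _ _
          _ = |x + s| ^ p + x ^ p + p * |s| * x ^ (p-1) := by
              rw [abs_of_nonneg h0, abs_of_nonneg h0', h0'']
      have t2 : p * |s| * x ^ (p - 1) ≤ p * 2 ^ (p-1) * |s| ^ p := by
        calc p * |s| * x ^ (p-1) ≤ p * |s| * (2 ^ (p-1) * |s| ^ (p-1)) := by
              gcongr
          _ = p * 2 ^ (p-1) * (|s| * |s| ^ (p-1)) := by ring
          _ = p * 2 ^ (p-1) * |s| ^ p := by rw [hs1]
      calc |(|x + s| ^ p) - x ^ p - p * s * x ^ (p - 1)|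
          ≤ |x + s| ^ p + x ^ p + p * |s| * x ^ (p - 1) := t1
        _ ≤ 3 ^ p * |s| ^ p + 2 ^ p * |s| ^ p + p * 2 ^ (p-1) * |s| ^ p := by
            gcongr
        _ = C₀ * |s| ^ p := by ring
    calc |(|x + s| ^ p) - x ^ p - p * s * x ^ (p - 1)| ≤ C₀ * |s| ^ p := hLHS
      _ = C₀ * (s ^ 2 * |s| ^ (p-2)) := by rw [hspow]
      _ ≤ (C₀ + C₁) * s ^ 2 * (x ^ (p - 2) + |s| ^ (p - 2)) := by
          have h1 : (0:ℝ) ≤ x ^ (p-2) := Real.rpow_nonneg hx _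
          have h2 : (0:ℝ) ≤ |s| ^ (p-2) := Real.rpow_nonneg (abs_nonneg s) _
          nlinarith [sq_nonneg s, mul_nonneg (sq_nonneg s) h1,
            mul_nonneg (sq_nonneg s) h2, mul_nonneg hC₁pos.le (mul_nonneg (sq_nonneg s) (add_nonneg h1 h2))]
  · -- Case 2: 2|s| < x
    push_neg at hcase
    have hxpos : 0 < x := lt_of_le_of_lt (by positivity) hcase
    have hxs : 0 < x + s := by
      have := neg_abs_le s
      linarith
    set S : Set ℝ := Icc (x - |s|) (x + |s|) with hS
    have hxS : x ∈ S := by constructor <;> [linarith [abs_nonneg s]; linarith [abs_nonneg s]]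
    have hxsS : x + s ∈ S := by
      constructor <;> [linarith [neg_abs_le s]; linarith [le_abs_self s]]
    set L : ℝ := p * ((p - 1) * (x + |s|) ^ (p - 2)) with hL
    have hLnn : 0 ≤ L := by positivity
    set φ : ℝ → ℝ := fun u => p * u ^ (p - 1) with hφ
    have hφderiv : ∀ u ∈ S, HasDerivWithinAt φ (p * ((p - 1) * u ^ (p - 2))) S u := by
      intro u _
      have h := (Real.hasDerivAt_rpow_const (x := u) (p := p - 1) (Or.inr hp1)).const_mul p
      have : p - 1 - 1 = p - 2 := by ring
      rw [this] at h
      exact h.hasDerivWithinAt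
    have hφbound : ∀ u ∈ S, ‖p * ((p - 1) * u ^ (p - 2))‖ ≤ L := by
      intro u hu
      have hu0 : 0 ≤ u := by
        have := hu.1; linarith
      have hub : u ≤ x + |s| := hu.2
      have : u ^ (p-2) ≤ (x + |s|) ^ (p-2) := Real.rpow_le_rpow hu0 hub hp2
      rw [Real.norm_eq_abs, abs_of_nonneg (by positivity)]
      rw [hL]
      gcongr
    have hφlip : ∀ u ∈ S, ‖φ u - φ x‖ ≤ L * |s| := by
      intro u hu
      have := (convex_Icc _ _).norm_image_sub_le_of_norm_hasDerivWithin_le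
        hφderiv hφbound hxS hu
      calc ‖φ u - φ x‖ ≤ L * ‖u - x‖ := this
        _ ≤ L * |s| := by
            gcongr
            rw [Real.norm_eq_abs]
            rw [abs_le]
            constructor <;> [linarith [hu.1]; linarith [hu.2]]
    set g : ℝ → ℝ := fun u => u ^ p - x ^ p - p * x ^ (p - 1) * (u - x) with hg
    have hgderiv : ∀ u ∈ S, HasDerivWithinAt g (φ u - φ x) S u := by
      intro u _
      have h1 := (Real.hasDerivAt_rpow_const (x := u) (p := p) (Or.inr (by linarith))).sub_const (x ^ p)
      have h2 := ((hasDerivAt_id u).sub_const x).const_mul (p * x ^ (p - 1))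
      have h := h1.sub h2
      have heq : p * u ^ (p-1) - p * x ^ (p - 1) * 1 = φ u - φ x := by
        rw [hφ]; ring
      rw [heq] at h
      exact h.hasDerivWithinAt
    have hgbound : ∀ u ∈ S, ‖φ u - φ x‖ ≤ L * |s| := hφlip
    have hmvt := (convex_Icc _ _).norm_image_sub_le_of_norm_hasDerivWithin_le
      hgderiv hgbound hxS hxsS
    have hgx : g x = 0 := by simp [hg]
    have hgxs : g (x + s) = (x + s) ^ p - x ^ p - p * x ^ (p - 1) * s := by
      simp [hg]
    rw [hgx, sub_zero, hgxs] at hmvt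
    have hnorm : ‖x + s - x‖ = |s| := by
      rw [Real.norm_eq_abs]; ring_nf
    rw [hnorm] at hmvt
    have key : |(x + s) ^ p - x ^ p - p * s * x ^ (p - 1)| ≤ L * s ^ 2 := by
      have : p * x ^ (p-1) * s = p * s * x ^ (p-1) := by ring
      rw [this] at hmvt
      calc |(x + s) ^ p - x ^ p - p * s * x ^ (p - 1)| ≤ L * |s| * |s| := hmvt
        _ = L * s ^ 2 := by rw [mul_assoc, ← abs_mul, ← sq, abs_of_nonneg (sq_nonneg s)]
    have habs2 : |x + s| = x + s := abs_of_pos hxs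
    rw [habs2]
    have hLbound : L ≤ C₁ * x ^ (p - 2) := by
      have h1 : x + |s| ≤ (3/2) * x := by linarith
      have h2 : (x + |s|) ^ (p-2) ≤ ((3/2) * x) ^ (p-2) :=
        Real.rpow_le_rpow (by positivity) h1 hp2
      have h3 : ((3:ℝ)/2 * x) ^ (p-2) = (3/2) ^ (p-2) * x ^ (p-2) :=
        Real.mul_rpow (by norm_num) hxpos.le
      rw [h3] at h2
      calc L = p * ((p - 1) * (x + |s|) ^ (p - 2)) := hL
        _ ≤ p * ((p - 1) * ((3/2) ^ (p - 2) * x ^ (p - 2))) := by gcongr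
        _ = C₁ * x ^ (p - 2) := by rw [hC₁]; ring
    calc |(x + s) ^ p - x ^ p - p * s * x ^ (p - 1)| ≤ L * s ^ 2 := key
      _ ≤ C₁ * x ^ (p-2) * s ^ 2 := mul_le_mul_of_nonneg_right hLbound (sq_nonneg s)
      _ ≤ (C₀ + C₁) * s ^ 2 * (x ^ (p - 2) + |s| ^ (p - 2)) := by
          have h1 : (0:ℝ) ≤ x ^ (p-2) := Real.rpow_nonneg hxpos.le _
          have h2 : (0:ℝ) ≤ |s| ^ (p-2) := Real.rpow_nonneg (abs_nonneg s) _
          nlinarith [sq_nonneg s, mul_nonneg (sq_nonneg s) h2, mul_nonneg hC₀pos.le (mul_nonneg (sq_nonneg s) (add_nonneg h1 h2)), mul_nonneg hC₁pos.le (mul_nonneg (sq_nonneg s) h2)]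

private lemma taylor_aux2 (p : ℝ) (hp : 2 ≤ p) (x s : ℝ) :
    |(|x + s| ^ p) - |x| ^ p - p * s * Real.sign x * |x| ^ (p - 1)| ≤
      ((3:ℝ) ^ p + 2 ^ p + p * 2 ^ (p - 1) + p * (p - 1) * (3/2) ^ (p - 2)) * s ^ 2
        * (|x| ^ (p - 2) + |s| ^ (p - 2)) := by
  rcases le_or_gt 0 x with h | h
  · exact taylor_aux p hp x s h
  · have h2 := taylor_aux p hp (-x) (-s) (by linarith)
    have e1 : -x + -s = -(x + s) := by ring
    rw [e1, abs_neg, abs_neg, abs_neg, Real.sign_neg, neg_sq] at h2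
    have e2 : p * -s * -Real.sign x * |x| ^ (p-1) = p * s * Real.sign x * |x| ^ (p-1) := by ring
    rw [e2] at h2
    exact h2

/-- Second-order Taylor estimate for `u ↦ |u|^p`, `p ≥ 2`: there is a constant `C > 0`
depending only on `p` such that for all reals `x, y` and `t ∈ [-1,1]`,
`| |x+ty|^p − |x|^p − p·t·y·sign(x)·|x|^(p-1) | ≤ C t² |y|² (|x|^(p-2) + |y|^(p-2))`. -/
theorem taylor_abs_rpow_ge_two (p : ℝ) (hp : 2 ≤ p) :
    ∃ C : ℝ, 0 < C ∧ ∀ x y t : ℝ, t ∈ Set.Icc (-1 : ℝ) 1 →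
      |(|x + t * y| ^ p) - |x| ^ p - p * t * y * Real.sign x * |x| ^ (p - 1)| ≤
        C * t ^ 2 * |y| ^ 2 * (|x| ^ (p - 2) + |y| ^ (p - 2)) := by
  have hp0 : (0:ℝ) < p := by linarith
  have hCpos' : 0 < (3:ℝ) ^ p + 2 ^ p + p * 2 ^ (p - 1) + p * (p - 1) * ((3:ℝ)/2) ^ (p - 2) := by
    have h1 : (0:ℝ) < (3:ℝ) ^ p := Real.rpow_pos_of_pos (by norm_num) _
    have h2 : (0:ℝ) < (2:ℝ) ^ p := Real.rpow_pos_of_pos (by norm_num) _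
    have h3 : (0:ℝ) < (2:ℝ) ^ (p-1) := Real.rpow_pos_of_pos (by norm_num) _
    have h4 : (0:ℝ) < ((3:ℝ)/2) ^ (p-2) := Real.rpow_pos_of_pos (by norm_num) _
    have h5 : (0:ℝ) < p * (p - 1) * ((3:ℝ)/2) ^ (p-2) :=
      mul_pos (mul_pos hp0 (by linarith)) h4
    have h6 : (0:ℝ) < p * 2 ^ (p-1) := mul_pos hp0 h3
    linarith
  refine ⟨(3:ℝ) ^ p + 2 ^ p + p * 2 ^ (p - 1) + p * (p - 1) * (3/2) ^ (p - 2), hCpos',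
    fun x y t ht => ?_⟩
  set C : ℝ := (3:ℝ) ^ p + 2 ^ p + p * 2 ^ (p - 1) + p * (p - 1) * (3/2) ^ (p - 2) with hC
  have h := taylor_aux2 p hp x (t * y)
  have e1 : p * (t * y) = p * t * y := by ring
  rw [← hC, show p * (t * y) * Real.sign x * |x| ^ (p-1) = p * t * y * Real.sign x * |x| ^ (p-1) by ring] at h
  refine h.trans ?_
  have ht1 : |t| ≤ 1 := abs_le.mpr ⟨ht.1, ht.2⟩
  have hty : |t * y| ^ (p - 2) ≤ |y| ^ (p - 2) := by
    rw [abs_mul, Real.mul_rpow (abs_nonneg t) (abs_nonneg y)]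
    have : |t| ^ (p-2) ≤ 1 := Real.rpow_le_one (abs_nonneg t) ht1 (by linarith)
    calc |t| ^ (p-2) * |y| ^ (p-2) ≤ 1 * |y| ^ (p-2) :=
          mul_le_mul_of_nonneg_right this (Real.rpow_nonneg (abs_nonneg y) _)
      _ = |y| ^ (p-2) := one_mul _
  have e2 : (t * y) ^ 2 = t ^ 2 * |y| ^ 2 := by rw [mul_pow, sq_abs]
  calc C * (t * y) ^ 2 * (|x| ^ (p - 2) + |t * y| ^ (p - 2))
      ≤ C * (t * y) ^ 2 * (|x| ^ (p - 2) + |y| ^ (p - 2)) := by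
        gcongr
      _ = C * t ^ 2 * |y| ^ 2 * (|x| ^ (p - 2) + |y| ^ (p - 2)) := by
        rw [e2]; ring
end

section
/- Let p ≥ 2. There is a constant C > 0 depending only on p such that for all real x, y and t ∈ [-1,1]: | |x + t·y|^p + |x − t·y|^p − 2|x|^p | ≤ C · t² · |y|² · (|x|^(p-2) + |y|^(p-2)). -/
private lemma lipA (q : ℝ) (hq : 1 ≤ q) {b a c : ℝ} (hb : 0 ≤ b) (hba : b ≤ a)
    (hac : a ≤ c) : a ^ q - b ^ q ≤ q * c ^ (q - 1) * (a - b) := by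
  have key : ‖a ^ q - b ^ q‖ ≤ q * c ^ (q - 1) * ‖a - b‖ := by
    have := Convex.norm_image_sub_le_of_norm_hasDerivWithin_le
      (f := fun x : ℝ => x ^ q) (f' := fun x : ℝ => q * x ^ (q - 1))
      (s := Set.Icc b a) (C := q * c ^ (q - 1))
      (fun x _ => (Real.hasDerivAt_rpow_const (Or.inr hq)).hasDerivWithinAt)
      (fun x hx => by
        rw [Real.norm_eq_abs, abs_mul, abs_of_nonneg (by linarith : (0:ℝ) ≤ q),
          abs_of_nonneg (Real.rpow_nonneg (hb.trans hx.1) _)]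
        exact mul_le_mul_of_nonneg_left
          (Real.rpow_le_rpow (hb.trans hx.1) (hx.2.trans hac) (by linarith))
          (by linarith))
      (convex_Icc b a) (Set.left_mem_Icc.2 hba) (Set.right_mem_Icc.2 hba)
    simpa using this
  have h1 : a ^ q - b ^ q ≤ |a ^ q - b ^ q| := le_abs_self _
  rw [Real.norm_eq_abs, Real.norm_eq_abs, abs_of_nonneg (by linarith : (0:ℝ) ≤ a - b)] at key
  linarith

private lemma mvt_bound (p : ℝ) (hp : 2 ≤ p) {u w : ℝ} (hu : 0 < u) (hw0 : 0 ≤ w)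
    (hwu : w ≤ u) :
    |(u + w) ^ p + (u - w) ^ p - 2 * u ^ p| ≤ 2 * p * (p - 1) * (2 * u) ^ (p - 2) * w ^ 2 := by
  set D : ℝ := p * ((p - 1) * (2 * u) ^ (p - 2) * (2 * w)) with hD
  have hderiv : ∀ s ∈ Set.Icc (0:ℝ) w,
      HasDerivWithinAt (fun s : ℝ => (u + s) ^ p + (u - s) ^ p)
        (p * (u + s) ^ (p - 1) * 1 + p * (u - s) ^ (p - 1) * (-1)) (Set.Icc (0:ℝ) w) s := by
    intro s _
    have h1 : HasDerivAt (fun s : ℝ => (u + s) ^ p) (p * (u + s) ^ (p - 1) * 1) s :=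
      (Real.hasDerivAt_rpow_const (Or.inr (by linarith))).comp s
        ((hasDerivAt_id s).const_add u)
    have h2 : HasDerivAt (fun s : ℝ => (u - s) ^ p) (p * (u - s) ^ (p - 1) * (-1)) s :=
      (Real.hasDerivAt_rpow_const (Or.inr (by linarith))).comp s
        ((hasDerivAt_id s).const_sub u)
    exact (h1.add h2).hasDerivWithinAt
  have hbound : ∀ s ∈ Set.Icc (0:ℝ) w,
      ‖p * (u + s) ^ (p - 1) * 1 + p * (u - s) ^ (p - 1) * (-1)‖ ≤ D := by
    intro s hs
    have hs0 : 0 ≤ s := hs.1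
    have hsw : s ≤ w := hs.2
    have hus : 0 ≤ u - s := by linarith
    have hd1 : (u + s) ^ (p - 1) - (u - s) ^ (p - 1) ≤
        (p - 1) * (2 * u) ^ (p - 2) * ((u + s) - (u - s)) := by
      have := lipA (p - 1) (by linarith) (b := u - s) (a := u + s) (c := 2 * u)
        hus (by linarith) (by linarith)
      have hq : p - 1 - 1 = p - 2 := by ring
      rw [hq] at this
      exact this
    have hmono : (u - s) ^ (p - 1) ≤ (u + s) ^ (p - 1) :=
      Real.rpow_le_rpow hus (by linarith) (by linarith)
    have hp0 : (0:ℝ) ≤ p := by linarith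
    have hpow : (0:ℝ) ≤ (2 * u) ^ (p - 2) := Real.rpow_nonneg (by linarith) _
    rw [Real.norm_eq_abs]
    have heq : p * (u + s) ^ (p - 1) * 1 + p * (u - s) ^ (p - 1) * (-1)
        = p * ((u + s) ^ (p - 1) - (u - s) ^ (p - 1)) := by ring
    rw [heq, abs_of_nonneg (by nlinarith), hD]
    have hss : (u + s) - (u - s) = 2 * s := by ring
    rw [hss] at hd1
    have h2s : (p - 1) * (2 * u) ^ (p - 2) * (2 * s) ≤
        (p - 1) * (2 * u) ^ (p - 2) * (2 * w) := by
      have hc : (0:ℝ) ≤ (p - 1) * (2 * u) ^ (p - 2) := by nlinarith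
      nlinarith [mul_le_mul_of_nonneg_left (show 2 * s ≤ 2 * w by linarith) hc]
    nlinarith
  have key := Convex.norm_image_sub_le_of_norm_hasDerivWithin_le hderiv hbound
    (convex_Icc 0 w) (Set.left_mem_Icc.2 hw0) (Set.right_mem_Icc.2 hw0)
  simp only [add_zero, sub_zero, Real.norm_eq_abs] at key
  have heq2 : |(u + w) ^ p + (u - w) ^ p - 2 * u ^ p|
      = |((u + w) ^ p + (u - w) ^ p) - (u ^ p + u ^ p)| := by ring_nf
  rw [heq2]
  calc |((u + w) ^ p + (u - w) ^ p) - (u ^ p + u ^ p)| ≤ D * |w| := key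
    _ = 2 * p * (p - 1) * (2 * u) ^ (p - 2) * w ^ 2 := by
        rw [abs_of_nonneg hw0, hD]; ring

private lemma core (p : ℝ) (hp : 2 ≤ p) {u w : ℝ} (hu : 0 ≤ u) (hw : 0 ≤ w) :
    |(u + w) ^ p + |u - w| ^ p - 2 * u ^ p| ≤
      (2 ^ p + 3 + p * p * 2 ^ p) * w ^ 2 * (u ^ (p - 2) + w ^ (p - 2)) := by
  have hup : (0:ℝ) ≤ u ^ (p - 2) := Real.rpow_nonneg hu _
  have hwp : (0:ℝ) ≤ w ^ (p - 2) := Real.rpow_nonneg hw _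
  have h2p : (0:ℝ) < 2 ^ p := Real.rpow_pos_of_pos (by norm_num) _
  have hp0 : (0:ℝ) ≤ p := by linarith
  rcases le_total w u with hwu | huw
  · -- w ≤ u
    rcases eq_or_lt_of_le hu with rfl | hu'
    · have hw0 : w = 0 := le_antisymm (by simpa using hwu) hw
      subst hw0
      simp [Real.zero_rpow (by linarith : p ≠ 0)]
    · have habs : |u - w| = u - w := abs_of_nonneg (by linarith)
      rw [habs]
      have key := mvt_bound p hp hu' hw hwu
      have h2u : (2 * u) ^ (p - 2) = 2 ^ (p - 2) * u ^ (p - 2) :=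
        Real.mul_rpow (by norm_num) hu
      have he : (0:ℝ) < 2 ^ (p - 2) := Real.rpow_pos_of_pos (by norm_num) _
      have h4 : (2:ℝ) ^ p = 4 * 2 ^ (p - 2) := by
        calc (2:ℝ) ^ p = 2 ^ ((2:ℝ) + (p - 2)) := by rw [show (2:ℝ) + (p - 2) = p by ring]
          _ = 2 ^ (2:ℝ) * 2 ^ (p - 2) := Real.rpow_add (by norm_num) _ _
          _ = 4 * 2 ^ (p - 2) := by rw [Real.rpow_two]; norm_num
      have step1 : 2 * p * (p - 1) * 2 ^ (p - 2) ≤ p * p * 2 ^ p := by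
        nlinarith [mul_nonneg (mul_nonneg (show (0:ℝ) ≤ 2 * p by linarith) he.le)
          (show (0:ℝ) ≤ p + 1 by linarith)]
      have step2 : |(u + w) ^ p + (u - w) ^ p - 2 * u ^ p|
          ≤ p * p * 2 ^ p * (u ^ (p - 2) * w ^ 2) := by
        rw [h2u] at key
        calc |(u + w) ^ p + (u - w) ^ p - 2 * u ^ p|
            ≤ 2 * p * (p - 1) * (2 ^ (p - 2) * u ^ (p - 2)) * w ^ 2 := key
          _ = (2 * p * (p - 1) * 2 ^ (p - 2)) * (u ^ (p - 2) * w ^ 2) := by ring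
          _ ≤ p * p * 2 ^ p * (u ^ (p - 2) * w ^ 2) :=
              mul_le_mul_of_nonneg_right step1 (mul_nonneg hup (sq_nonneg w))
      refine step2.trans ?_
      nlinarith [mul_nonneg (mul_nonneg (mul_nonneg hp0 hp0) h2p.le)
          (mul_nonneg (sq_nonneg w) hwp),
        mul_nonneg (mul_nonneg h2p.le (sq_nonneg w)) (add_nonneg hup hwp),
        mul_nonneg (sq_nonneg w) (add_nonneg hup hwp)]
  · -- u ≤ w
    have habs : |u - w| = w - u := by
      rw [abs_sub_comm, abs_of_nonneg (by linarith)]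
    rw [habs]
    have hwp' : w ^ p = w ^ 2 * w ^ (p - 2) := by
      calc w ^ p = w ^ ((2:ℝ) + (p - 2)) := by rw [show (2:ℝ) + (p - 2) = p by ring]
        _ = w ^ (2:ℝ) * w ^ (p - 2) := Real.rpow_add' hw (by rw [show (2:ℝ)+(p-2) = p by ring]; positivity)
        _ = w ^ 2 * w ^ (p - 2) := by rw [Real.rpow_two]
    have h1 : (u + w) ^ p ≤ 2 ^ p * w ^ p := by
      calc (u + w) ^ p ≤ (2 * w) ^ p :=
          Real.rpow_le_rpow (by linarith) (by linarith) hp0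
        _ = 2 ^ p * w ^ p := Real.mul_rpow (by norm_num) hw
    have h2 : (w - u) ^ p ≤ w ^ p :=
      Real.rpow_le_rpow (by linarith) (by linarith) hp0
    have h3 : u ^ p ≤ w ^ p := Real.rpow_le_rpow hu huw hp0
    have h0a : (0:ℝ) ≤ (u + w) ^ p := Real.rpow_nonneg (by linarith) _
    have h0b : (0:ℝ) ≤ (w - u) ^ p := Real.rpow_nonneg (by linarith) _
    have h0c : (0:ℝ) ≤ u ^ p := Real.rpow_nonneg hu _
    have habs2 : |(u + w) ^ p + (w - u) ^ p - 2 * u ^ p|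
        ≤ (2 ^ p + 3) * w ^ p := by
      rw [abs_le]
      constructor <;> nlinarith
    refine habs2.trans ?_
    rw [hwp']
    nlinarith [mul_nonneg (mul_nonneg (mul_nonneg hp0 hp0) h2p.le)
        (mul_nonneg (sq_nonneg w) (add_nonneg hup hwp)),
      mul_nonneg (mul_nonneg h2p.le (sq_nonneg w)) hup,
      mul_nonneg (sq_nonneg w) hup,
      mul_nonneg (sq_nonneg w) hwp]

private lemma combo (p x v : ℝ) :
    |x + v| ^ p + |x - v| ^ p = (|x| + |v|) ^ p + |(|x| - |v|)| ^ p := by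
  rcases le_total 0 x with hx | hx <;> rcases le_total 0 v with hv | hv
  · rw [abs_of_nonneg hx, abs_of_nonneg hv,
      abs_of_nonneg (by linarith : (0:ℝ) ≤ x + v)]
  · have h1 : |x + v| = |x - (-v)| := by rw [show x + v = x - (-v) by ring]
    have h2 : |x - v| = x + (-v) := by rw [abs_of_nonneg (by linarith)]; ring
    rw [abs_of_nonneg hx, abs_of_nonpos hv, h1, h2, add_comm]
  · have h1 : |x + v| = |(-x) - v| := by
      rw [show x + v = -((-x) - v) by ring, abs_neg]
    have h2 : |x - v| = (-x) + v := by rw [abs_of_nonpos (by linarith)]; ring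
    rw [abs_of_nonpos hx, abs_of_nonneg hv, h1, h2, add_comm]
  · have h1 : |x + v| = (-x) + (-v) := by rw [abs_of_nonpos (by linarith)]; ring
    have h2 : |x - v| = |(-x) - (-v)| := by
      rw [show x - v = -((-x) - (-v)) by ring, abs_neg]
    rw [abs_of_nonpos hx, abs_of_nonpos hv, h1, h2]

/-- Parallelogram-type Taylor estimate for `u ↦ |u|^p`, `p ≥ 2`: there is a constant `C > 0`
depending only on `p` such that for all reals `x, y` and `t ∈ [-1,1]`,
`| |x+ty|^p + |x−ty|^p − 2|x|^p | ≤ C t² |y|² (|x|^(p-2) + |y|^(p-2))`. -/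
theorem parallelogram_taylor_abs_rpow (p : ℝ) (hp : 2 ≤ p) :
    ∃ C : ℝ, 0 < C ∧ ∀ x y t : ℝ, t ∈ Set.Icc (-1 : ℝ) 1 →
      |(|x + t * y| ^ p) + |x - t * y| ^ p - 2 * |x| ^ p| ≤
        C * t ^ 2 * |y| ^ 2 * (|x| ^ (p - 2) + |y| ^ (p - 2)) := by
  have h2p : (0:ℝ) < 2 ^ p := Real.rpow_pos_of_pos (by norm_num) _
  refine ⟨2 ^ p + 3 + p * p * 2 ^ p, by nlinarith, ?_⟩
  intro x y t ht
  have hC : (0:ℝ) ≤ 2 ^ p + 3 + p * p * 2 ^ p := by nlinarith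
  have ht1 : |t| ≤ 1 := abs_le.2 ⟨ht.1, ht.2⟩
  have hc := core p hp (abs_nonneg x) (abs_nonneg (t * y))
  rw [combo p x (t * y)]
  have hwle : |t * y| ^ (p - 2) ≤ |y| ^ (p - 2) := by
    apply Real.rpow_le_rpow (abs_nonneg _) _ (by linarith)
    rw [abs_mul]
    calc |t| * |y| ≤ 1 * |y| := mul_le_mul_of_nonneg_right ht1 (abs_nonneg y)
      _ = |y| := one_mul _
  have hw2 : |t * y| ^ 2 = t ^ 2 * |y| ^ 2 := by
    rw [abs_mul, mul_pow, sq_abs]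
  calc |(|x| + |t * y|) ^ p + |(|x| - |t * y|)| ^ p - 2 * |x| ^ p|
      ≤ (2 ^ p + 3 + p * p * 2 ^ p) * |t * y| ^ 2 *
        (|x| ^ (p - 2) + |t * y| ^ (p - 2)) := hc
    _ ≤ (2 ^ p + 3 + p * p * 2 ^ p) * |t * y| ^ 2 *
        (|x| ^ (p - 2) + |y| ^ (p - 2)) := by
        apply mul_le_mul_of_nonneg_left (by linarith)
          (mul_nonneg hC (sq_nonneg _))
    _ = (2 ^ p + 3 + p * p * 2 ^ p) * t ^ 2 * |y| ^ 2 *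
        (|x| ^ (p - 2) + |y| ^ (p - 2)) := by rw [hw2]; ring
end

section
/- Let (E, dom) be a functional with Γ_p energy measures as above satisfying the Minkowski property Γ_p(f+g)(U)^(1/p) ≤ Γ_p(f)(U)^(1/p) + Γ_p(g)(U)^(1/p), Γ_p(−h) = Γ_p(h), and Γ_p(h)(X) = E(h) for all h. Let f ∈ dom and f_n ∈ dom with E(f − f_n) → 0 as n → ∞. If each Γ_p(f_n) is absolutely continuous with respect to μ, then Γ_p(f) is absolutely continuous with respect to μ. -/
open MeasureTheory Filter Topology ENNReal

/-- Suppose energy measures `Γ_p(h)` (finite Borel measures) satisfy the Minkowski property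
`Γ_p(f+g)(U)^{1/p} ≤ Γ_p(f)(U)^{1/p} + Γ_p(g)(U)^{1/p}` on open sets, `Γ_p(−h) = Γ_p(h)`,
and have total mass `Γ_p(h)(X) = E(h)`. If `E(f − f_n) → 0` and each `Γ_p(f_n)` is absolutely
continuous with respect to `μ`, then `Γ_p(f)` is absolutely continuous with respect to `μ`. -/
theorem energyMeasure_absCont_limit {X : Type*} [MetricSpace X] [MeasurableSpace X]
    [BorelSpace X] (μ : Measure X) (p : ℝ) (hp : 1 ≤ p)
    (Γp : (X → ℝ) → Measure X) (E : (X → ℝ) → ℝ≥0∞)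
    (hfin : ∀ h : X → ℝ, IsFiniteMeasure (Γp h))
    (hmass : ∀ h : X → ℝ, Γp h Set.univ = E h)
    (hMink : ∀ f g : X → ℝ, ∀ U : Set X, IsOpen U →
      (Γp (fun x => f x + g x) U) ^ (1 / p) ≤ (Γp f U) ^ (1 / p) + (Γp g U) ^ (1 / p))
    (hneg : ∀ h : X → ℝ, Γp (fun x => -h x) = Γp h)
    (f : X → ℝ) (fn : ℕ → X → ℝ)
    (hE : Tendsto (fun n => E (fun x => f x - fn n x)) atTop (𝓝 0))
    (hac : ∀ n, Γp (fn n) ≪ μ) :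
    Γp f ≪ μ := by
  have hp0 : (0:ℝ) < p := lt_of_lt_of_le one_pos hp
  have hip : (0:ℝ) < 1 / p := by positivity
  apply MeasureTheory.Measure.AbsolutelyContinuous.mk
  intro s hs hμs
  -- it suffices to bound (Γp f s)^(1/p) by every positive ε
  have key : ∀ ε : NNReal, 0 < ε → (Γp f s) ^ (1/p) ≤ (ε : ℝ≥0∞) := by
    intro ε hε
    have hεp : (0:ℝ≥0∞) < ((ε : ℝ≥0∞) / 2) ^ p := by
      apply ENNReal.rpow_pos
      · exact ENNReal.div_pos (by exact_mod_cast hε.ne') (by norm_num)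
      · exact (ENNReal.div_lt_top (by simp) (by norm_num)).ne
    -- pick n with small energy of the difference
    obtain ⟨n, hn⟩ : ∃ n, E (fun x => f x - fn n x) < ((ε : ℝ≥0∞) / 2) ^ p := by
      have := hE.eventually_lt_const hεp
      exact this.exists
    -- pick an open set U ⊇ s with Γp (fn n) U small
    haveI := hfin (fn n)
    haveI := hfin f
    have h0 : Γp (fn n) s = 0 := hac n hμs
    obtain ⟨U, hsU, hUopen, hU⟩ :=
      s.exists_isOpen_lt_of_lt (μ := Γp (fn n)) _ (h0 ▸ hεp)
    have hdecomp : (fun x => fn n x + (f x - fn n x)) = f := by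
      funext x; ring
    have h1 : (Γp f U) ^ (1/p) ≤ (Γp (fn n) U) ^ (1/p)
        + (Γp (fun x => f x - fn n x) U) ^ (1/p) := by
      have := hMink (fn n) (fun x => f x - fn n x) U hUopen
      rwa [hdecomp] at this
    have h2 : (Γp (fn n) U) ^ (1/p) ≤ (ε : ℝ≥0∞) / 2 := by
      calc (Γp (fn n) U) ^ (1/p) ≤ (((ε : ℝ≥0∞) / 2) ^ p) ^ (1/p) :=
            ENNReal.rpow_le_rpow hU.le hip.le
        _ = (ε : ℝ≥0∞) / 2 := by
            rw [← ENNReal.rpow_mul, mul_one_div_cancel hp0.ne', ENNReal.rpow_one]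
    have h3 : (Γp (fun x => f x - fn n x) U) ^ (1/p) ≤ (ε : ℝ≥0∞) / 2 := by
      have hle : Γp (fun x => f x - fn n x) U ≤ ((ε : ℝ≥0∞) / 2) ^ p := by
        calc Γp (fun x => f x - fn n x) U
            ≤ Γp (fun x => f x - fn n x) Set.univ := measure_mono (Set.subset_univ _)
          _ = E (fun x => f x - fn n x) := hmass _
          _ ≤ ((ε : ℝ≥0∞) / 2) ^ p := hn.le
      calc (Γp (fun x => f x - fn n x) U) ^ (1/p) ≤ (((ε : ℝ≥0∞) / 2) ^ p) ^ (1/p) :=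
            ENNReal.rpow_le_rpow hle hip.le
        _ = (ε : ℝ≥0∞) / 2 := by
            rw [← ENNReal.rpow_mul, mul_one_div_cancel hp0.ne', ENNReal.rpow_one]
    calc (Γp f s) ^ (1/p) ≤ (Γp f U) ^ (1/p) :=
          ENNReal.rpow_le_rpow (measure_mono hsU) hip.le
      _ ≤ (ε : ℝ≥0∞) / 2 + (ε : ℝ≥0∞) / 2 := h1.trans (add_le_add h2 h3)
      _ = (ε : ℝ≥0∞) := ENNReal.add_halves _
  have hzero : (Γp f s) ^ (1/p) = 0 := by
    by_contra h
    obtain ⟨ε, hε0, hε⟩ := exists_between (pos_iff_ne_zero.2 h)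
    lift ε to NNReal using hε.ne_top
    exact absurd (key ε (by exact_mod_cast hε0)) (not_le.2 hε)
  rcases (ENNReal.rpow_eq_zero_iff).1 hzero with ⟨h, _⟩ | ⟨_, h⟩
  · exact h
  · linarith
end
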